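/- Let (Ω, 𝒫) be a probability space, p ∈ [0,1], and a, b, x₀ real numbers with x₀ ≠ 0, |p·a + (1−p)·b| < 1 and p·a² + (1−p)·b² > 1. Let ξ : ℕ → Ω → ℝ be an independent family of random variables such that for every i, ξ i takes only the values a and b, with 𝒫(ξ i = a) = p and 𝒫(ξ i = b) = 1 − p, and define x_k = x₀ · ∏_{i < k} ξ i. Then the sequence of means E[x_k] converges to 0 as k → ∞ while the sequence of second moments E[x_k²] tends to +∞ as k → ∞. -/

import Mathlib

open MeasureTheory ProbabilityTheory

lemma aux_two_val {Ω : Type*} [MeasurableSpace Ω] (P : Measure Ω)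
    [IsProbabilityMeasure P] (X : Ω → ℝ) (s : Set Ω) (hs : MeasurableSet s)
    (a b : ℝ) (hpt : ∀ ω, X ω = b + (a - b) * s.indicator (fun _ => (1:ℝ)) ω) :
    Integrable X P ∧ ∫ ω, X ω ∂P = b + (a - b) * (P s).toReal := by
  have hX : X = fun ω => b + (a - b) * s.indicator (fun _ => (1:ℝ)) ω := funext hpt
  have hind : Integrable (s.indicator (fun _ => (1:ℝ))) P :=
    (integrable_const (1:ℝ)).indicator hs
  constructor
  · rw [hX]; exact (integrable_const b).add (hind.const_mul _)
  · rw [hX]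
    rw [integral_add (integrable_const b) (hind.const_mul _), integral_const,
      integral_const_mul, integral_indicator_const _ hs]
    simp [measure_univ, Measure.real]

lemma aux_prod_integral {Ω : Type*} [MeasurableSpace Ω] (P : Measure Ω)
    [IsProbabilityMeasure P] (f : ℕ → Ω → ℝ) (hm : ∀ i, Measurable (f i))
    (hind : iIndepFun f P)
    (hint : ∀ i, Integrable (f i) P) (k : ℕ) :
    Integrable (∏ i ∈ Finset.range k, f i) P ∧
      ∫ ω, (∏ i ∈ Finset.range k, f i) ω ∂P = ∏ i ∈ Finset.range k, ∫ ω, f i ω ∂P := by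
  induction k with
  | zero =>
    refine ⟨?_, by simp⟩
    exact integrable_const (1:ℝ)
  | succ n ih =>
    have hip : IndepFun (∏ j ∈ Finset.range n, f j) (f n) P :=
      hind.indepFun_prod_range_succ hm n
    rw [Finset.prod_range_succ, Finset.prod_range_succ]
    refine ⟨hip.integrable_mul ih.1 (hint n), ?_⟩
    rw [← ih.2, ← hip.integral_mul_eq_mul_integral ih.1.aestronglyMeasurable (hint n).aestronglyMeasurable]

theorem stmt_15 {Ω : Type*} [MeasurableSpace Ω] (P : Measure Ω)
    [IsProbabilityMeasure P] (p a b x₀ : ℝ) (hp : p ∈ Set.Icc (0 : ℝ) 1)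
    (hx₀ : x₀ ≠ 0)
    (hmean : |p * a + (1 - p) * b| < 1)
    (hsecond : 1 < p * a ^ 2 + (1 - p) * b ^ 2)
    (ξ : ℕ → Ω → ℝ) (hmeas : ∀ i, Measurable (ξ i))
    (hindep : iIndepFun ξ P)
    (hval : ∀ i, ∀ ω, ξ i ω = a ∨ ξ i ω = b)
    (ha : ∀ i, P {ω | ξ i ω = a} = ENNReal.ofReal p)
    (hb : ∀ i, P {ω | ξ i ω = b} = ENNReal.ofReal (1 - p)) :
    Filter.Tendsto
        (fun k : ℕ => ∫ ω, (x₀ * ∏ i ∈ Finset.range k, ξ i ω) ∂P)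
        Filter.atTop (nhds 0) ∧
      Filter.Tendsto
        (fun k : ℕ => ∫ ω, (x₀ * ∏ i ∈ Finset.range k, ξ i ω) ^ 2 ∂P)
        Filter.atTop Filter.atTop := by
  obtain ⟨hp0, hp1⟩ := hp
  set s : ℕ → Set Ω := fun i => {ω | ξ i ω = a} with hs_def
  have hs : ∀ i, MeasurableSet (s i) := fun i => (hmeas i) (measurableSet_singleton a)
  have hPs : ∀ i, (P (s i)).toReal = p := by
    intro i; rw [ha i, ENNReal.toReal_ofReal hp0]
  -- first moments of ξ i
  have h1 : ∀ i, Integrable (ξ i) P ∧ ∫ ω, ξ i ω ∂P = p * a + (1 - p) * b := by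
    intro i
    have := aux_two_val P (ξ i) (s i) (hs i) a b ?_
    · refine ⟨this.1, ?_⟩
      rw [this.2, hPs i]; ring
    · intro ω
      by_cases h : ω ∈ s i
      · simp only [Set.indicator_of_mem h]
        have : ξ i ω = a := h
        rw [this]; ring
      · simp only [Set.indicator_of_notMem h]
        have : ξ i ω = b := (hval i ω).resolve_left h
        rw [this]; ring
  -- second moments of ξ i
  have h2 : ∀ i, Integrable (fun ω => (ξ i ω) ^ 2) P ∧
      ∫ ω, (ξ i ω) ^ 2 ∂P = p * a ^ 2 + (1 - p) * b ^ 2 := by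
    intro i
    have := aux_two_val P (fun ω => (ξ i ω) ^ 2) (s i) (hs i) (a ^ 2) (b ^ 2) ?_
    · refine ⟨this.1, ?_⟩
      rw [this.2, hPs i]; ring
    · intro ω
      by_cases h : ω ∈ s i
      · simp only [Set.indicator_of_mem h]
        have : ξ i ω = a := h
        rw [this]; ring
      · simp only [Set.indicator_of_notMem h]
        have : ξ i ω = b := (hval i ω).resolve_left h
        rw [this]; ring
  -- product integrals
  have hprod1 := fun k => aux_prod_integral P ξ hmeas hindep (fun i => (h1 i).1) k
  have hindep2 : iIndepFun (fun i ω => (ξ i ω) ^ 2) P :=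
    hindep.comp (fun _ x => x ^ 2) (fun _ => measurable_id.pow_const 2)
  have hprod2 := fun k => aux_prod_integral P (fun i ω => (ξ i ω) ^ 2)
    (fun i => (hmeas i).pow_const 2) hindep2 (fun i => (h2 i).1) k
  have key1 : ∀ k : ℕ, (∫ ω, (x₀ * ∏ i ∈ Finset.range k, ξ i ω) ∂P)
      = x₀ * (p * a + (1 - p) * b) ^ k := by
    intro k
    rw [integral_const_mul]
    have : (fun ω => ∏ i ∈ Finset.range k, ξ i ω)
        = (∏ i ∈ Finset.range k, ξ i) := by
      funext ω; simp [Finset.prod_apply]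
    rw [show (∫ ω, ∏ i ∈ Finset.range k, ξ i ω ∂P)
        = ∫ ω, (∏ i ∈ Finset.range k, ξ i) ω ∂P from by rw [← this]]
    rw [(hprod1 k).2]
    congr 1
    rw [Finset.prod_congr rfl (fun i _ => (h1 i).2), Finset.prod_const,
      Finset.card_range]
  have key2 : ∀ k : ℕ, (∫ ω, (x₀ * ∏ i ∈ Finset.range k, ξ i ω) ^ 2 ∂P)
      = x₀ ^ 2 * (p * a ^ 2 + (1 - p) * b ^ 2) ^ k := by
    intro k
    have heq : ∀ ω, (x₀ * ∏ i ∈ Finset.range k, ξ i ω) ^ 2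
        = x₀ ^ 2 * (∏ i ∈ Finset.range k, (fun j ω' => (ξ j ω') ^ 2) i) ω := by
      intro ω
      simp only [Finset.prod_apply, mul_pow, Finset.prod_pow]
    rw [integral_congr_ae (Filter.Eventually.of_forall heq), integral_const_mul,
      (hprod2 k).2]
    congr 1
    rw [Finset.prod_congr rfl (fun i _ => (h2 i).2), Finset.prod_const,
      Finset.card_range]
  constructor
  · simp only [key1]
    have := (tendsto_pow_atTop_nhds_zero_of_abs_lt_one hmean).const_mul x₀
    simpa using this
  · simp only [key2]
    have hx2 : 0 < x₀ ^ 2 := by positivity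
    exact (tendsto_pow_atTop_atTop_of_one_lt hsecond).const_mul_atTop hx2
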